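/- arXiv:1310.2713 — 4 statements merged into one kernel-verified Lean document; each statement's English description precedes it below -/
import Mathlib

section
/- In Cl(2), for all α, β ∈ ℝ, the rejection of the point ι(a(α)) by the point ι(a(β)), namely (1/2) • (ι(a(α)) * ι(a(β)) − ι(a(β)) * ι(a(α))) * ι(a(β)), equals sin (α − β) • (ι(a(β)) * e₀ * e₁); that is, the rejection coincides with the polar point of a(β) weighted by sin(α − β). -/
/-- The standard positive-definite quadratic form `Q(x) = x₀² + x₁²` on `ℝ²`. -/
noncomputable def Qe2 : QuadraticForm ℝ (Fin 2 → ℝ) :=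
  QuadraticMap.weightedSumSquares ℝ (fun _ : Fin 2 => (1 : ℝ))

/-- The canonical embedding of `ℝ²` into the Clifford algebra `Cl(2)`. -/
noncomputable def ι2 : (Fin 2 → ℝ) →ₗ[ℝ] CliffordAlgebra Qe2 := CliffordAlgebra.ι Qe2

/-- The unit vector `a(θ) = (−sin θ, cos θ)` dually representing a point of `El¹`. -/
noncomputable def pt (θ : ℝ) : Fin 2 → ℝ := ![-Real.sin θ, Real.cos θ]

/-- The image of the first standard basis vector in `Cl(2)`. -/
noncomputable def e0 : CliffordAlgebra Qe2 := ι2 ![1, 0]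

/-- The image of the second standard basis vector in `Cl(2)`. -/
noncomputable def e1 : CliffordAlgebra Qe2 := ι2 ![0, 1]


lemma Qval (v : Fin 2 → ℝ) : Qe2 v = v 0 ^ 2 + v 1 ^ 2 := by
  simp [Qe2, QuadraticMap.weightedSumSquares_apply, Fin.sum_univ_two, sq]

lemma h00 : e0 * e0 = 1 := by
  rw [e0, ι2, CliffordAlgebra.ι_sq_scalar, Qval]
  norm_num

lemma h11 : e1 * e1 = 1 := by
  rw [e1, ι2, CliffordAlgebra.ι_sq_scalar, Qval]
  norm_num

lemma h10 : e1 * e0 = -(e0 * e1) := by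
  have := CliffordAlgebra.ι_mul_ι_add_swap (Q := Qe2) ![1,0] ![0,1]
  rw [QuadraticMap.polar] at this
  have hz : Qe2 (![1,0] + ![0,1]) - Qe2 ![1,0] - Qe2 ![0,1] = 0 := by
    simp [Qval]
  rw [hz, map_zero] at this
  rw [e0, e1, ι2]
  rw [eq_neg_iff_add_eq_zero]; rw [add_comm]; exact this

lemma e0_sq_mul (x : CliffordAlgebra Qe2) : e0 * (e0 * x) = x := by
  rw [← mul_assoc, h00, one_mul]

lemma e1_sq_mul (x : CliffordAlgebra Qe2) : e1 * (e1 * x) = x := by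
  rw [← mul_assoc, h11, one_mul]

lemma hpt (θ : ℝ) : ι2 (pt θ) = (-Real.sin θ) • e0 + Real.cos θ • e1 := by
  rw [e0, e1, ← map_smul, ← map_smul, ← map_add]
  congr 1
  funext i
  fin_cases i <;> simp [pt]

/-- The rejection of the point `ι(a(α))` by the point `ι(a(β))`, namely
`(1/2) • (ι(a(α)) ι(a(β)) − ι(a(β)) ι(a(α))) ι(a(β))`, equals
`sin(α − β) • (ι(a(β)) e₀ e₁)`, the polar point of `a(β)` weighted by `sin(α − β)`. -/
theorem elliptic_line_rejection (α β : ℝ) :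
    ((1 : ℝ) / 2) • ((ι2 (pt α) * ι2 (pt β) - ι2 (pt β) * ι2 (pt α)) * ι2 (pt β)) =
      Real.sin (α - β) • (ι2 (pt β) * e0 * e1) := by
  rw [hpt α, hpt β, Real.sin_sub]
  simp only [add_mul, mul_add, sub_mul, smul_mul_assoc, mul_smul_comm, smul_smul,
    smul_add, smul_sub, mul_assoc, h10, e0_sq_mul, e1_sq_mul, h00, h11, mul_one, one_mul, mul_neg,
    neg_mul, smul_neg, neg_neg, neg_smul]
  module
end

section
/- Let u be a quaternion with re u = 0 and ‖u‖ = 1, and let θ, φ ∈ ℝ. If p is a quaternion with re p = 0 and re (p * star u) = 0, then the quaternion p' = exp(θ • u) * p * exp(φ • u) also satisfies re p' = 0 and re (p' * star u) = 0; that is, the polar axis ΛI of a double rotation of elliptic 3-space (the great circle cut out by the orthogonal complement of the plane spanned by 1 and u) is invariant under the double rotation. -/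
lemma aux_re (u : Quaternion ℝ) (hre : u.re = 0)
    (hnorm : ‖u‖ = 1) (a b c d : ℝ) (p : Quaternion ℝ)
    (hp1 : p.re = 0) (hp2 : (p * star u).re = 0) :
    (((a : Quaternion ℝ) + b • u) * p * ((c : Quaternion ℝ) + d • u)).re = 0 ∧
      (((a : Quaternion ℝ) + b • u) * p * ((c : Quaternion ℝ) + d • u) * star u).re = 0 := by
  have hn : u.imI ^ 2 + u.imJ ^ 2 + u.imK ^ 2 = 1 := by
    have := Quaternion.normSq_eq_norm_mul_self u
    rw [hnorm] at this
    simp [Quaternion.normSq_def', hre, sq] at this ⊢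
    linarith [this]
  simp only [Quaternion.re_mul, Quaternion.re_add, Quaternion.imI_add, Quaternion.imJ_add,
    Quaternion.imK_add, Quaternion.imI_mul, Quaternion.imJ_mul, Quaternion.imK_mul,
    Quaternion.re_coe, Quaternion.imI_coe, Quaternion.imJ_coe, Quaternion.imK_coe,
    Quaternion.re_smul, Quaternion.imI_smul, Quaternion.imJ_smul, Quaternion.imK_smul,
    Quaternion.re_star, Quaternion.imI_star, Quaternion.imJ_star, Quaternion.imK_star,
    smul_eq_mul, hre, hp1] at hp2 ⊢
  constructor
  · linear_combination (-(a * d + b * c)) * hp2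
  · linear_combination (a * c - b * d * (u.imI ^ 2 + u.imJ ^ 2 + u.imK ^ 2)) * hp2

/-- The polar axis `ΛI` of a double rotation `p ↦ exp(θ • u) * p * exp(φ • u)` of
elliptic 3-space — the great circle cut out by the orthogonal complement of the plane
spanned by `1` and `u` (characterized by `re p = 0` and `re (p * star u) = 0`) — is
invariant under the double rotation. -/
theorem double_rotation_polar_axis_invariant (u : Quaternion ℝ) (hre : u.re = 0)
    (hnorm : ‖u‖ = 1) (θ φ : ℝ) (p : Quaternion ℝ)
    (hp1 : p.re = 0) (hp2 : (p * star u).re = 0) :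
    (NormedSpace.exp (θ • u) * p * NormedSpace.exp (φ • u)).re = 0 ∧
      (NormedSpace.exp (θ • u) * p * NormedSpace.exp (φ • u) * star u).re = 0 := by
  have h1 : NormedSpace.exp (θ • u) =
      ((Real.cos ‖θ • u‖ : ℝ) : Quaternion ℝ) + ((Real.sin ‖θ • u‖ / ‖θ • u‖) * θ) • u := by
    rw [Quaternion.exp_of_re_eq_zero _ (by simp [hre]), smul_smul]
  have h2 : NormedSpace.exp (φ • u) =
      ((Real.cos ‖φ • u‖ : ℝ) : Quaternion ℝ) + ((Real.sin ‖φ • u‖ / ‖φ • u‖) * φ) • u := by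
    rw [Quaternion.exp_of_re_eq_zero _ (by simp [hre]), smul_smul]
  rw [h1, h2]
  exact aux_re u hre hnorm _ _ _ _ p hp1 hp2
end

section
/- For all vectors a, b ∈ ℝ³ (with the Euclidean inner product ⟪·,·⟫) there exist vectors a₁, b₁ ∈ ℝ³ and a real number t with |t| ≤ 1 such that ⟪a₁, b₁⟫ = 0, a = a₁ + t • b₁ and b = b₁ + t • a₁; that is, every bivector of elliptic 3-space decomposes as the sum of two complementary lines (its axes), the smaller axis being a multiple t of the polar of the larger axis. -/
open scoped RealInnerProductSpace

/-- Every bivector of elliptic 3-space, recorded as a pair of vectors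
`a, b ∈ ℝ³`, decomposes as the sum of two complementary lines (its axes): there are
`a₁, b₁` with `⟪a₁, b₁⟫ = 0` and `t` with `|t| ≤ 1` such that `a = a₁ + t b₁` and
`b = b₁ + t a₁`; the smaller axis is the multiple `t` of the polar of the larger axis. -/
theorem bivector_axes_decomposition (a b : EuclideanSpace ℝ (Fin 3)) :
    ∃ (a₁ b₁ : EuclideanSpace ℝ (Fin 3)) (t : ℝ), |t| ≤ 1 ∧ ⟪a₁, b₁⟫ = 0 ∧
      a = a₁ + t • b₁ ∧ b = b₁ + t • a₁ := by
  obtain ⟨s, hs⟩ : ∃ s : ℝ, s = ⟪a, b⟫ := ⟨_, rfl⟩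
  obtain ⟨q, hq⟩ : ∃ q : ℝ, q = ‖a‖ ^ 2 + ‖b‖ ^ 2 := ⟨_, rfl⟩
  by_cases hs0 : s = 0
  · exact ⟨a, b, 0, by norm_num, by rw [← hs, hs0], by simp, by simp⟩
  have hcs : s ^ 2 ≤ ‖a‖ ^ 2 * ‖b‖ ^ 2 := by
    have := abs_real_inner_le_norm a b
    rw [hs]
    nlinarith [abs_nonneg ⟪a, b⟫, sq_abs ⟪a, b⟫, norm_nonneg a, norm_nonneg b]
  have hs2 : 0 < s ^ 2 := by positivity
  have hq0 : 0 < q := by rw [hq]; nlinarith [sq_nonneg ‖a‖, sq_nonneg ‖b‖]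
  have hdisc : 0 ≤ q ^ 2 - 4 * s ^ 2 := by
    nlinarith [sq_nonneg (‖a‖ ^ 2 - ‖b‖ ^ 2), hq]
  have expand : ∀ u : ℝ, ⟪a - u • b, b - u • a⟫ = s * (1 + u ^ 2) - u * q := by
    intro u
    rw [hs, hq]
    simp only [inner_sub_left, inner_sub_right, real_inner_smul_left,
      real_inner_smul_right, real_inner_self_eq_norm_sq, real_inner_comm b a]
    ring
  by_cases hd : q ^ 2 - 4 * s ^ 2 = 0
  · -- degenerate case: a = t • b with t = 2s/q
    refine ⟨0, b, 2 * s / q, ?_, by simp, ?_, by simp⟩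
    · rw [abs_div, abs_of_pos hq0, div_le_one hq0]
      nlinarith [sq_abs (2 * s), abs_nonneg (2 * s)]
    · have hnorm : ‖a - (2 * s / q) • b‖ ^ 2 = 0 := by
        rw [norm_sub_sq_real, norm_smul, real_inner_smul_right, Real.norm_eq_abs,
          mul_pow, sq_abs, ← hs]
        have hqne : q ≠ 0 := ne_of_gt hq0
        field_simp
        linear_combination (q - ‖b‖ ^ 2) * hd - q ^ 2 * hq
      have : a - (2 * s / q) • b = 0 := by
        rwa [pow_eq_zero_iff (by norm_num), norm_eq_zero] at hnorm
      have := sub_eq_zero.mp this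
      rw [this]; abel
  · -- main case
    have hd' : 0 < q ^ 2 - 4 * s ^ 2 := lt_of_le_of_ne hdisc (Ne.symm hd)
    obtain ⟨r, hr⟩ : ∃ r : ℝ, r = Real.sqrt (q ^ 2 - 4 * s ^ 2) := ⟨_, rfl⟩
    have hr2 : r ^ 2 = q ^ 2 - 4 * s ^ 2 := by rw [hr]; exact Real.sq_sqrt hdisc
    have hrpos : 0 < r := by rw [hr]; exact Real.sqrt_pos.mpr hd'
    have hrq : r < q := by nlinarith
    obtain ⟨t, ht⟩ : ∃ t : ℝ, t = (q - r) / (2 * s) := ⟨_, rfl⟩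
    have hroot : s * t ^ 2 - q * t + s = 0 := by
      rw [ht]; field_simp; nlinarith
    have ht2 : t ^ 2 < 1 := by
      rw [ht, div_pow, div_lt_one (by positivity)]
      nlinarith
    have htabs : |t| ≤ 1 := by nlinarith [sq_abs t, abs_nonneg t]
    have h1t : (1 : ℝ) - t ^ 2 ≠ 0 := by nlinarith
    refine ⟨(1 - t ^ 2)⁻¹ • (a - t • b), (1 - t ^ 2)⁻¹ • (b - t • a), t, htabs, ?_, ?_, ?_⟩
    · rw [real_inner_smul_left, real_inner_smul_right, expand t]
      have hz : s * (1 + t ^ 2) - t * q = 0 := by linear_combination hroot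
      rw [hz]; ring
    · match_scalars <;> field_simp <;> ring
    · match_scalars <;> field_simp <;> ring
end

section
/- For all real numbers r₁, r₂ with 0 ≤ r₁ ≤ r₂ ≤ π/2, setting u = cos r₁ * cos r₂ and v = sin r₁ * sin r₂, one has 2 * (sin r₁)² = 1 + v² − u² − Real.sqrt ((1 + v² − u²)² − 4 * v²); that is, the distance r = r₁ between two normalized lines of elliptic 3-space is recovered from the scalars u = Λ·Φ (up to sign) and v = Λ∨Φ of their geometric product by the formula 2 sin² r = 1 + v² − u² − √((1 + v² − u²)² − 4v²). -/
open Real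

/-- The distance `r = r₁` between two normalized lines of elliptic 3-space is recovered
from the scalars `u = cos r₁ cos r₂` and `v = sin r₁ sin r₂` of their geometric product
by the formula `2 sin² r = 1 + v² − u² − √((1 + v² − u²)² − 4v²)`. -/
theorem elliptic_line_distance_formula (r₁ r₂ : ℝ) (h0 : 0 ≤ r₁) (h12 : r₁ ≤ r₂)
    (h2 : r₂ ≤ π / 2) :
    2 * Real.sin r₁ ^ 2 =
      1 + (Real.sin r₁ * Real.sin r₂) ^ 2 - (Real.cos r₁ * Real.cos r₂) ^ 2 -
        Real.sqrt ((1 + (Real.sin r₁ * Real.sin r₂) ^ 2 -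
            (Real.cos r₁ * Real.cos r₂) ^ 2) ^ 2 -
          4 * (Real.sin r₁ * Real.sin r₂) ^ 2) := by
  have hs1 : Real.sin r₁ ≤ Real.sin r₂ := by
    apply Real.sin_le_sin_of_le_of_le_pi_div_two (by linarith [Real.pi_pos]) h2 h12
  have hc1 : Real.sin r₁ ^ 2 + Real.cos r₁ ^ 2 = 1 := Real.sin_sq_add_cos_sq r₁
  have hc2 : Real.sin r₂ ^ 2 + Real.cos r₂ ^ 2 = 1 := Real.sin_sq_add_cos_sq r₂
  have key : (1 + (Real.sin r₁ * Real.sin r₂) ^ 2 - (Real.cos r₁ * Real.cos r₂) ^ 2) ^ 2 -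
      4 * (Real.sin r₁ * Real.sin r₂) ^ 2 = (Real.sin r₂ ^ 2 - Real.sin r₁ ^ 2) ^ 2 := by
    have e1 : Real.cos r₁ ^ 2 = 1 - Real.sin r₁ ^ 2 := by linarith
    have e2 : Real.cos r₂ ^ 2 = 1 - Real.sin r₂ ^ 2 := by linarith
    rw [mul_pow, mul_pow, e1, e2]; ring
  have hsn : 0 ≤ Real.sin r₁ := Real.sin_nonneg_of_nonneg_of_le_pi h0 (by linarith [Real.pi_pos])
  rw [key, Real.sqrt_sq (by nlinarith)]
  nlinarith [hc1, hc2]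
end
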